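/- Let A ⊆ ℝ be an open invex set with respect to η : A × A → ℝ and suppose f : A → ℝ is a differentiable function with |f′| prequasiinvex with respect to η on A. Then for every a, b ∈ A with a < a + η(b,a): | (f(a) + f(a+η(b,a)))/2 − (1/η(b,a)) · ∫_a^{a+η(b,a)} f(x) dx | ≤ (|η(b,a)|/4) · max{|f′(a)|, |f′(b)|}. -/

import Mathlib

open Real MeasureTheory Set

open intervalIntegral in
lemma aux_int_left (a c : ℝ) : (∫ x in a..c, (c - x)) = (c - a) ^ 2 / 2 := by
  rw [integral_sub intervalIntegrable_const intervalIntegrable_id]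
  simp [smul_eq_mul]; ring

open intervalIntegral in
lemma aux_int_right (c B : ℝ) : (∫ x in c..B, (x - c)) = (B - c) ^ 2 / 2 := by
  rw [integral_sub intervalIntegrable_id intervalIntegrable_const]
  simp [smul_eq_mul]; ring

/-- Hermite–Hadamard type inequality (Barani et al.) for
differentiable functions with prequasiinvex `|f'|`. -/
theorem prequasiinvex_deriv_HH
    (A : Set ℝ) (η : ℝ → ℝ → ℝ) (f f' : ℝ → ℝ)
    (hA : IsOpen A)
    (hinv : ∀ x ∈ A, ∀ y ∈ A, ∀ t ∈ Icc (0:ℝ) 1, x + t * η y x ∈ A)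
    (hder : ∀ x ∈ A, HasDerivAt f (f' x) x)
    (hpq : ∀ x ∈ A, ∀ y ∈ A, ∀ t ∈ Icc (0:ℝ) 1,
      |f' (x + t * η y x)| ≤ max |f' x| |f' y|) :
    ∀ a ∈ A, ∀ b ∈ A, a < a + η b a →
      |(f a + f (a + η b a)) / 2 - (1 / η b a) * ∫ x in a..(a + η b a), f x|
        ≤ |η b a| / 4 * max |f' a| |f' b| := by
  intro a ha b hb hab
  have hh : 0 < η b a := by linarith
  set h := η b a with hh_def
  set B := a + h with hB_def
  set c := a + h / 2 with hc_def
  set M := max |f' a| |f' b| with hM_def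
  have hM0 : 0 ≤ M := le_trans (abs_nonneg _) (le_max_left _ _)
  have haB : a ≤ B := le_of_lt hab
  have key : ∀ x ∈ Icc a B, x ∈ A ∧ |f' x| ≤ M := by
    intro x hx
    have ht : (x - a) / h ∈ Icc (0:ℝ) 1 := ⟨div_nonneg (by linarith [hx.1]) hh.le,
      (div_le_one hh).2 (by linarith [hx.2])⟩
    have hx' : a + (x - a) / h * h = x := by field_simp; ring
    constructor
    · have := hinv a ha b hb _ ht; rwa [hx'] at this
    · have := hpq a ha b hb _ ht; rwa [hx'] at this
  have hsub : Icc a B ⊆ A := fun x hx => (key x hx).1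
  have hbound : ∀ x ∈ Icc a B, |f' x| ≤ M := fun x hx => (key x hx).2
  -- integrability of f'
  have hmeas : AEStronglyMeasurable f' (volume.restrict (Icc a B)) := by
    have heq : ∀ x ∈ Icc a B, deriv f x = f' x := fun x hx => (hder x (hsub hx)).deriv
    exact (measurable_deriv f).aestronglyMeasurable.congr
      ((ae_restrict_mem measurableSet_Icc).mono fun x hx => heq x hx)
  have hint : IntegrableOn f' (Icc a B) volume := by
    refine Integrable.mono' (integrable_const M) hmeas ?_
    exact (ae_restrict_mem measurableSet_Icc).mono fun x hx => by
      simpa using hbound x hx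
  have hint' : IntervalIntegrable f' volume a B := by
    rw [intervalIntegrable_iff_integrableOn_Ioc_of_le haB]
    exact hint.mono_set Ioc_subset_Icc_self
  -- integration by parts
  have hibp := intervalIntegral.integral_mul_deriv_eq_deriv_mul
    (u := fun x => x - c) (u' := fun _ => (1:ℝ)) (v := f) (v' := f')
    (fun x _ => (hasDerivAt_id x).sub_const c)
    (fun x hx => hder x (hsub (by rwa [uIcc_of_le haB] at hx)))
    intervalIntegrable_const hint'
  simp only [one_mul] at hibp
  have hBc : B - c = h / 2 := by rw [hB_def, hc_def]; ring
  have hac : a - c = -(h / 2) := by rw [hc_def]; ring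
  have hId : (f a + f B) / 2 - (1 / h) * ∫ x in a..B, f x
      = (1 / h) * ∫ x in a..B, (x - c) * f' x := by
    rw [hibp, hBc, hac]
    field_simp
    ring
  rw [hId]
  -- bound the integral
  have habs : |∫ x in a..B, (x - c) * f' x| ≤ ∫ x in a..B, |x - c| * M := by
    have hg : IntervalIntegrable (fun x => |x - c| * M) volume a B :=
      (Continuous.intervalIntegrable ((continuous_id.sub continuous_const).abs.mul continuous_const) a B)
    have hb : ∀ᵐ x ∂volume.restrict (Set.uIoc a B), ‖(x - c) * f' x‖ ≤ |x - c| * M := by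
      rw [uIoc_of_le haB]
      exact (ae_restrict_mem measurableSet_Ioc).mono fun x hx => by
        rw [Real.norm_eq_abs, abs_mul]
        exact mul_le_mul_of_nonneg_left (hbound x (Ioc_subset_Icc_self hx)) (abs_nonneg _)
    calc |∫ x in a..B, (x - c) * f' x| ≤ |∫ x in a..B, |x - c| * M| :=
          intervalIntegral.norm_integral_le_abs_of_norm_le hb hg
      _ = ∫ x in a..B, |x - c| * M := by
          rw [abs_of_nonneg]
          apply intervalIntegral.integral_nonneg haB
          intro x _; positivity
  have hval : (∫ x in a..B, |x - c| * M) = h ^ 2 / 4 * M := by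
    have hsplit : (∫ x in a..B, |x - c| * M)
        = (∫ x in a..c, |x - c| * M) + ∫ x in c..B, |x - c| * M := by
      rw [intervalIntegral.integral_add_adjacent_intervals] <;>
        exact Continuous.intervalIntegrable ((continuous_id.sub continuous_const).abs.mul continuous_const) _ _
    have h1 : (∫ x in a..c, |x - c| * M) = ∫ x in a..c, (c - x) * M := by
      apply intervalIntegral.integral_congr
      intro x hx
      rw [uIcc_of_le (by rw [hc_def]; linarith)] at hx
      show |x - c| * M = (c - x) * M
      rw [abs_of_nonpos (by linarith [hx.2])]
      ring
    have h2 : (∫ x in c..B, |x - c| * M) = ∫ x in c..B, (x - c) * M := by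
      apply intervalIntegral.integral_congr
      intro x hx
      rw [uIcc_of_le (by rw [hc_def, hB_def]; linarith)] at hx
      show |x - c| * M = (x - c) * M
      rw [abs_of_nonneg (by linarith [hx.1])]
    have e1 : (∫ x in a..c, (c - x) * M) = (c - a) ^ 2 / 2 * M := by
      rw [intervalIntegral.integral_mul_const, aux_int_left]
    have e2 : (∫ x in c..B, (x - c) * M) = (B - c) ^ 2 / 2 * M := by
      rw [intervalIntegral.integral_mul_const, aux_int_right]
    rw [hsplit, h1, h2, e1, e2, hBc]
    have : c - a = h / 2 := by rw [hc_def]; ring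
    rw [this]; ring
  rw [abs_mul, abs_of_pos (by positivity : (0:ℝ) < 1/h)]
  calc 1 / h * |∫ x in a..B, (x - c) * f' x| ≤ 1 / h * (h ^ 2 / 4 * M) := by
        rw [← hval]
        exact mul_le_mul_of_nonneg_left habs (by positivity)
    _ = |h| / 4 * M := by rw [abs_of_pos hh]; field_simp
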